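/- Let μ and ν be probability measures on ℝ with cumulative distribution functions Q_μ and Q_ν. Then the first Wasserstein distance satisfies W₁(μ, ν) = ∫_ℝ |Q_μ(t) − Q_ν(t)| dt. -/

import Mathlib

open MeasureTheory ENNReal ProbabilityTheory

/-- A coupling of two measures on ℝ. -/
def IsCoupling (π : Measure (ℝ × ℝ)) (μ ν : Measure ℝ) : Prop :=
  π.map Prod.fst = μ ∧ π.map Prod.snd = ν

/-- The first Wasserstein distance, as infimum over couplings of `∫ |x−y| dπ`. -/
noncomputable def wasserstein1 (μ ν : Measure ℝ) : ℝ≥0∞ :=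
  ⨅ π ∈ {π : Measure (ℝ × ℝ) | IsCoupling π μ ν},
    ∫⁻ z, ENNReal.ofReal |z.1 - z.2| ∂π

namespace W1Aux

open Set Filter
open scoped Topology

/-! ### The symmetric-difference interval -/

def symSet (a b : ℝ) : Set ℝ := {t | (a ≤ t ∧ t < b) ∨ (b ≤ t ∧ t < a)}

lemma symSet_eq (a b : ℝ) : symSet a b = Ico (a ⊓ b) (a ⊔ b) := by
  ext t
  rcases le_total a b with h | h
  · simp only [symSet, mem_setOf_eq, mem_Ico, inf_eq_left.2 h, sup_eq_right.2 h]
    constructor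
    · rintro (⟨h1, h2⟩ | ⟨h1, h2⟩)
      · exact ⟨h1, h2⟩
      · exact absurd h1 (by push_neg; linarith)
    · exact fun hh => Or.inl hh
  · simp only [symSet, mem_setOf_eq, mem_Ico, inf_eq_right.2 h, sup_eq_left.2 h]
    constructor
    · rintro (⟨h1, h2⟩ | ⟨h1, h2⟩)
      · exact absurd h1 (by push_neg; linarith)
      · exact ⟨h1, h2⟩
    · exact fun hh => Or.inr hh

lemma measurableSet_symSet (a b : ℝ) : MeasurableSet (symSet a b) := by
  rw [symSet_eq]; exact measurableSet_Ico

lemma volume_symSet (a b : ℝ) : volume (symSet a b) = ENNReal.ofReal |a - b| := by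
  rw [symSet_eq, Real.volume_Ico, max_sub_min_eq_abs, abs_sub_comm]

lemma measurableSet_E : MeasurableSet {p : (ℝ × ℝ) × ℝ | p.2 ∈ symSet p.1.1 p.1.2} := by
  have h1 : Measurable fun p : (ℝ × ℝ) × ℝ => p.1.1 := measurable_fst.fst
  have h2 : Measurable fun p : (ℝ × ℝ) × ℝ => p.1.2 := measurable_fst.snd
  have h3 : Measurable fun p : (ℝ × ℝ) × ℝ => p.2 := measurable_snd
  exact ((measurableSet_le h1 h3).inter (measurableSet_lt h3 h2)).union
    ((measurableSet_le h2 h3).inter (measurableSet_lt h3 h1))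

lemma measurableSet_symSection (t : ℝ) :
    MeasurableSet {z : ℝ × ℝ | t ∈ symSet z.1 z.2} :=
  ((measurableSet_le measurable_fst measurable_const).inter
    (measurableSet_lt measurable_const measurable_snd)).union
  ((measurableSet_le measurable_snd measurable_const).inter
    (measurableSet_lt measurable_const measurable_fst))

/-- Layer-cake/Fubini representation of `∫ |x−y| dπ`. -/
lemma lintegral_abs_eq (P : Measure (ℝ × ℝ)) [IsProbabilityMeasure P] :
    ∫⁻ z, ENNReal.ofReal |z.1 - z.2| ∂P
      = ∫⁻ t, P {z : ℝ × ℝ | t ∈ symSet z.1 z.2} := by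
  have hE := measurableSet_E
  calc ∫⁻ z, ENNReal.ofReal |z.1 - z.2| ∂P
      = ∫⁻ z, ∫⁻ t, {p : (ℝ × ℝ) × ℝ | p.2 ∈ symSet p.1.1 p.1.2}.indicator 1 (z, t) ∂volume ∂P := by
        refine lintegral_congr fun z => ?_
        have : ∀ t, ({p : (ℝ × ℝ) × ℝ | p.2 ∈ symSet p.1.1 p.1.2}.indicator 1 (z, t) : ℝ≥0∞)
            = (symSet z.1 z.2).indicator 1 t := by
          intro t; rfl
        simp_rw [this]
        rw [lintegral_indicator (measurableSet_symSet _ _)]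
        simp [volume_symSet]
    _ = ∫⁻ t, ∫⁻ z, {p : (ℝ × ℝ) × ℝ | p.2 ∈ symSet p.1.1 p.1.2}.indicator 1 (z, t) ∂P ∂volume :=
        lintegral_lintegral_swap ((measurable_one.indicator hE).aemeasurable)
    _ = ∫⁻ t, P {z : ℝ × ℝ | t ∈ symSet z.1 z.2} := by
        refine lintegral_congr fun t => ?_
        have : ∀ z : ℝ × ℝ, ({p : (ℝ × ℝ) × ℝ | p.2 ∈ symSet p.1.1 p.1.2}.indicator 1 (z, t) : ℝ≥0∞)
            = ({z : ℝ × ℝ | t ∈ symSet z.1 z.2}).indicator 1 z := by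
          intro z; rfl
        simp_rw [this]
        rw [lintegral_indicator (measurableSet_symSection t)]
        simp

/-! ### Lower bound: any coupling dominates the cdf integrand -/

lemma isProbabilityMeasure_of_coupling {π : Measure (ℝ × ℝ)} {μ ν : Measure ℝ}
    [IsProbabilityMeasure μ] (h : IsCoupling π μ ν) : IsProbabilityMeasure π := by
  constructor
  rw [← Set.preimage_univ (f := (Prod.fst : ℝ × ℝ → ℝ)),
    ← Measure.map_apply measurable_fst MeasurableSet.univ, h.1]
  exact measure_univ

lemma ofReal_sub_le_measure_sdiff {α : Type*} [MeasurableSpace α] (P : Measure α)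
    (A B : Set α) {a b : ℝ} (hb : 0 ≤ b) (hA : P A = ENNReal.ofReal a)
    (hB : P B = ENNReal.ofReal b) :
    ENNReal.ofReal (a - b) ≤ P (A \ B ∪ B \ A) := by
  have hsub : A ⊆ (A ∩ B) ∪ (A \ B) := by
    intro x hx
    by_cases hxB : x ∈ B
    · exact Or.inl ⟨hx, hxB⟩
    · exact Or.inr ⟨hx, hxB⟩
  rw [ENNReal.ofReal_sub _ hb]
  rw [tsub_le_iff_right]
  calc ENNReal.ofReal a = P A := hA.symm
    _ ≤ P ((A ∩ B) ∪ (A \ B)) := measure_mono hsub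
    _ ≤ P (A ∩ B) + P (A \ B) := measure_union_le _ _
    _ ≤ P B + P (A \ B) := by gcongr; exact inter_subset_right
    _ ≤ P (A \ B ∪ B \ A) + ENNReal.ofReal b := by
        rw [add_comm, hB]; gcongr; exact subset_union_left

lemma abs_cdf_le {π : Measure (ℝ × ℝ)} {μ ν : Measure ℝ}
    [IsProbabilityMeasure μ] [IsProbabilityMeasure ν] (h : IsCoupling π μ ν) (t : ℝ) :
    ENNReal.ofReal |cdf μ t - cdf ν t| ≤ π {z : ℝ × ℝ | t ∈ symSet z.1 z.2} := by
  set A : Set (ℝ × ℝ) := Prod.fst ⁻¹' Iic t with hAdef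
  set B : Set (ℝ × ℝ) := Prod.snd ⁻¹' Iic t with hBdef
  have hA : π A = ENNReal.ofReal (cdf μ t) := by
    rw [← Measure.map_apply measurable_fst measurableSet_Iic, h.1, ofReal_cdf]
  have hB : π B = ENNReal.ofReal (cdf ν t) := by
    rw [← Measure.map_apply measurable_snd measurableSet_Iic, h.2, ofReal_cdf]
  have hset : {z : ℝ × ℝ | t ∈ symSet z.1 z.2} = A \ B ∪ B \ A := by
    ext z
    simp only [symSet, mem_setOf_eq, hAdef, hBdef, mem_union, mem_diff, mem_preimage,
      mem_Iic, not_le]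
  rw [hset]
  rcases le_total (cdf ν t) (cdf μ t) with hle | hle
  · rw [abs_of_nonneg (by linarith)]
    exact ofReal_sub_le_measure_sdiff π A B (cdf_nonneg ν t) hA hB
  · rw [abs_of_nonpos (by linarith), neg_sub]
    have := ofReal_sub_le_measure_sdiff π B A (cdf_nonneg μ t) hB hA
    rwa [union_comm]

/-! ### The quantile function and the optimal coupling -/

noncomputable def quant (F : StieltjesFunction ℝ) (u : ℝ) : ℝ := sInf {x | u ≤ F x}

variable {F : StieltjesFunction ℝ}

lemma quant_nonempty (h1 : Tendsto F atTop (𝓝 1)) {u : ℝ} (hu : u < 1) :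
    {x | u ≤ F x}.Nonempty := by
  obtain ⟨x, hx⟩ := (h1.eventually (eventually_ge_nhds hu)).exists
  exact ⟨x, hx⟩

lemma quant_bddBelow (h0 : Tendsto F atBot (𝓝 0)) {u : ℝ} (hu : 0 < u) :
    BddBelow {x | u ≤ F x} := by
  obtain ⟨x₀, hx₀⟩ := (h0.eventually (eventually_lt_nhds hu)).exists
  refine ⟨x₀, fun y hy => ?_⟩
  by_contra hc
  push_neg at hc
  exact absurd ((hy.trans (F.mono hc.le)).trans_lt hx₀) (lt_irrefl u)

lemma quant_le_iff (h0 : Tendsto F atBot (𝓝 0)) (h1 : Tendsto F atTop (𝓝 1))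
    {u : ℝ} (hu : u ∈ Ioo (0:ℝ) 1) (x : ℝ) : quant F u ≤ x ↔ u ≤ F x := by
  constructor
  · intro h
    by_contra hc
    push_neg at hc
    have hev : ∀ᶠ y in 𝓝[≥] x, F y < u := (F.right_continuous x).eventually_lt_const hc
    obtain ⟨b, hb, hsub⟩ := mem_nhdsGE_iff_exists_Ico_subset.1 hev
    have hxb : x < b := hb
    set y := (x + b) / 2 with hy
    have hxy : x < y := by rw [hy]; linarith
    have hyb : y < b := by rw [hy]; linarith
    have hFy : F y < u := hsub ⟨hxy.le, hyb⟩
    have hle : y ≤ quant F u :=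
      le_csInf (quant_nonempty h1 hu.2) fun z hz => (F.mono.reflect_lt (hFy.trans_le hz)).le
    exact absurd (hle.trans h) (not_le.2 hxy)
  · intro h
    exact csInf_le (quant_bddBelow h0 hu.1) h

lemma quant_monotoneOn (h0 : Tendsto F atBot (𝓝 0)) (h1 : Tendsto F atTop (𝓝 1)) :
    MonotoneOn (quant F) (Ioo (0:ℝ) 1) := fun _u hu _v hv huv =>
  csInf_le_csInf (quant_bddBelow h0 hu.1) (quant_nonempty h1 hv.2)
    fun _x hx => le_trans huv hx

lemma vol_Iic_inter {c : ℝ} (hc0 : 0 ≤ c) (hc1 : c ≤ 1) :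
    volume (Iic c ∩ Ioo 0 1) = ENNReal.ofReal c := by
  apply le_antisymm
  · have hss : Iic c ∩ Ioo 0 1 ⊆ Ioc 0 c := by
      rintro u ⟨hu1, hu2, hu3⟩; exact ⟨hu2, hu1⟩
    calc volume (Iic c ∩ Ioo 0 1) ≤ volume (Ioc 0 c) := measure_mono hss
      _ = ENNReal.ofReal c := by rw [Real.volume_Ioc]; norm_num
  · have hss : Ioo 0 c ⊆ Iic c ∩ Ioo 0 1 := by
      rintro u ⟨hu1, hu2⟩; exact ⟨hu2.le, hu1, hu2.trans_le hc1⟩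
    calc ENNReal.ofReal c = volume (Ioo 0 c) := by rw [Real.volume_Ioo]; norm_num
      _ ≤ volume (Iic c ∩ Ioo 0 1) := measure_mono hss

lemma vol_Ioc_inter {m M : ℝ} (hm : 0 ≤ m) (hM : M ≤ 1) :
    volume (Ioc m M ∩ Ioo 0 1) = ENNReal.ofReal (M - m) := by
  apply le_antisymm
  · exact le_trans (measure_mono inter_subset_left) (le_of_eq (Real.volume_Ioc))
  · have hss : Ioo m M ⊆ Ioc m M ∩ Ioo 0 1 := by
      rintro u ⟨hu1, hu2⟩; exact ⟨⟨hu1, hu2.le⟩, hm.trans_lt hu1, hu2.trans_le hM⟩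
    calc ENNReal.ofReal (M - m) = volume (Ioo m M) := (Real.volume_Ioo).symm
      _ ≤ volume (Ioc m M ∩ Ioo 0 1) := measure_mono hss

lemma aemeasurable_quant (μ : Measure ℝ) [IsProbabilityMeasure μ] :
    AEMeasurable (quant (cdf μ)) (volume.restrict (Ioo 0 1)) :=
  aemeasurable_restrict_of_monotoneOn measurableSet_Ioo
    (quant_monotoneOn (tendsto_cdf_atBot μ) (tendsto_cdf_atTop μ))

/-- The inverse-cdf map pushes the uniform distribution on `(0,1)` forward to `μ`. -/
lemma map_quant (μ : Measure ℝ) [IsProbabilityMeasure μ] :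
    (volume.restrict (Ioo 0 1)).map (quant (cdf μ)) = μ := by
  have h0 := tendsto_cdf_atBot μ
  have h1 := tendsto_cdf_atTop μ
  refine (Measure.ext_of_Iic μ _ fun x => ?_).symm
  rw [Measure.map_apply_of_aemeasurable (aemeasurable_quant μ) measurableSet_Iic,
    Measure.restrict_apply' measurableSet_Ioo]
  have hset : quant (cdf μ) ⁻¹' Iic x ∩ Ioo 0 1 = Iic (cdf μ x) ∩ Ioo 0 1 := by
    ext u
    simp only [mem_inter_iff, mem_preimage, mem_Iic, and_congr_left_iff]
    intro hu
    exact quant_le_iff h0 h1 hu x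
  rw [hset, vol_Iic_inter (cdf_nonneg μ x) (cdf_le_one μ x), ofReal_cdf]

variable (μ ν : Measure ℝ) [IsProbabilityMeasure μ] [IsProbabilityMeasure ν]

noncomputable def T : ℝ → ℝ × ℝ := fun u => (quant (cdf μ) u, quant (cdf ν) u)

lemma aemeasurable_T : AEMeasurable (T μ ν) (volume.restrict (Ioo 0 1)) :=
  (aemeasurable_quant μ).prodMk (aemeasurable_quant ν)

noncomputable def optCoupling : Measure (ℝ × ℝ) :=
  (volume.restrict (Ioo 0 1)).map (T μ ν)

lemma isCoupling_optCoupling : IsCoupling (optCoupling μ ν) μ ν := by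
  constructor
  · rw [optCoupling, AEMeasurable.map_map_of_aemeasurable
      measurable_fst.aemeasurable (aemeasurable_T μ ν)]
    exact map_quant μ
  · rw [optCoupling, AEMeasurable.map_map_of_aemeasurable
      measurable_snd.aemeasurable (aemeasurable_T μ ν)]
    exact map_quant ν

lemma optCoupling_symSection (t : ℝ) :
    (optCoupling μ ν) {z : ℝ × ℝ | t ∈ symSet z.1 z.2}
      = ENNReal.ofReal |cdf μ t - cdf ν t| := by
  have h0μ := tendsto_cdf_atBot μ
  have h1μ := tendsto_cdf_atTop μ
  have h0ν := tendsto_cdf_atBot ν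
  have h1ν := tendsto_cdf_atTop ν
  rw [optCoupling, Measure.map_apply_of_aemeasurable (aemeasurable_T μ ν)
      (measurableSet_symSection t),
    Measure.restrict_apply' measurableSet_Ioo]
  have hset : (T μ ν) ⁻¹' {z : ℝ × ℝ | t ∈ symSet z.1 z.2} ∩ Ioo 0 1
      = Ioc (cdf μ t ⊓ cdf ν t) (cdf μ t ⊔ cdf ν t) ∩ Ioo 0 1 := by
    ext u
    simp only [mem_inter_iff, mem_preimage, T, symSet, mem_setOf_eq, mem_Ioc,
      and_congr_left_iff]
    intro hu
    have gμ := quant_le_iff h0μ h1μ hu t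
    have gν := quant_le_iff h0ν h1ν hu t
    constructor
    · rintro (⟨ha, hb⟩ | ⟨ha, hb⟩)
      · have h1 : u ≤ cdf μ t := gμ.1 ha
        have h2 : cdf ν t < u := by
          by_contra hh
          push_neg at hh
          exact absurd (gν.2 hh) (not_le.2 hb)
        constructor
        · exact lt_of_le_of_lt inf_le_right h2
        · exact h1.trans le_sup_left
      · have h1 : u ≤ cdf ν t := gν.1 ha
        have h2 : cdf μ t < u := by
          by_contra hh
          push_neg at hh
          exact absurd (gμ.2 hh) (not_le.2 hb)
        constructor
        · exact lt_of_le_of_lt inf_le_left h2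
        · exact h1.trans le_sup_right
    · rintro ⟨hmin, hmax⟩
      rcases le_total (cdf μ t) (cdf ν t) with hc | hc
      · right
        have hmax' : u ≤ cdf ν t := le_trans hmax (le_of_eq (sup_eq_right.2 hc))
        have hmin' : cdf μ t < u := lt_of_eq_of_lt (inf_eq_left.2 hc).symm hmin
        refine ⟨gν.2 hmax', ?_⟩
        by_contra hh
        push_neg at hh
        exact absurd (gμ.1 hh) (not_le.2 hmin')
      · left
        have hmax' : u ≤ cdf μ t := le_trans hmax (le_of_eq (sup_eq_left.2 hc))
        have hmin' : cdf ν t < u := lt_of_eq_of_lt (inf_eq_right.2 hc).symm hmin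
        refine ⟨gμ.2 hmax', ?_⟩
        by_contra hh
        push_neg at hh
        exact absurd (gν.1 hh) (not_le.2 hmin')
  rw [hset, vol_Ioc_inter (le_inf (cdf_nonneg μ t) (cdf_nonneg ν t))
    (sup_le (cdf_le_one μ t) (cdf_le_one ν t)), max_sub_min_eq_abs, abs_sub_comm]

end W1Aux

open W1Aux Set in
/-- for probability measures on ℝ, the first Wasserstein distance equals the
integral of the absolute difference of the cumulative distribution functions:
`W₁(μ, ν) = ∫ |Q_μ(t) − Q_ν(t)| dt`. -/
theorem wasserstein1_eq_integral_abs_cdf_sub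
    (μ ν : Measure ℝ) [IsProbabilityMeasure μ] [IsProbabilityMeasure ν] :
    wasserstein1 μ ν = ∫⁻ t, ENNReal.ofReal |cdf μ t - cdf ν t| := by
  have hc : IsCoupling (optCoupling μ ν) μ ν := isCoupling_optCoupling μ ν
  haveI : IsProbabilityMeasure (optCoupling μ ν) := isProbabilityMeasure_of_coupling hc
  apply le_antisymm
  · have hle : wasserstein1 μ ν ≤ ∫⁻ z, ENNReal.ofReal |z.1 - z.2| ∂(optCoupling μ ν) :=
      iInf₂_le (optCoupling μ ν) hc
    refine hle.trans (le_of_eq ?_)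
    rw [lintegral_abs_eq (optCoupling μ ν)]
    exact lintegral_congr fun t => optCoupling_symSection μ ν t
  · refine le_iInf₂ fun π hπ => ?_
    haveI : IsProbabilityMeasure π := isProbabilityMeasure_of_coupling hπ
    rw [lintegral_abs_eq π]
    exact lintegral_mono fun t => abs_cdf_le hπ t
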